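/- Let f be a pseudo-polynomial with d ≥ 2, leading exponent θ_d and leading coefficient a_d. For a large positive integer N, let P be the largest real solution of f(P) = N. Then P − (N/a_d)^{1/θ_d} ≪ P^{θ_{d−1} − θ_d + 1}, where the implied constant depends only on f. -/

import Mathlib

open Finset

/-- A pseudo-polynomial `f(x) = a_d x^{θ_d} + ⋯ + a_1 x^{θ_1}` with real coefficients,
`a_d > 0`, real exponents `1 ≤ θ_1 < ⋯ < θ_d`, and at least one non-integral exponent. -/
structure PseudoPoly where
  d : ℕ
  d_pos : 1 ≤ d
  a : ℕ → ℝ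
  θ : ℕ → ℝ
  a_pos : 0 < a d
  θ_one : 1 ≤ θ 1
  θ_mono : ∀ i, 1 ≤ i → i < d → θ i < θ (i + 1)
  nonint : ∃ i, 1 ≤ i ∧ i ≤ d ∧ ∀ n : ℤ, θ i ≠ (n : ℝ)

noncomputable def PseudoPoly.eval (f : PseudoPoly) (x : ℝ) : ℝ :=
  ∑ i ∈ Finset.Icc 1 f.d, f.a i * x ^ f.θ i

/-- `P` is the largest real solution of `f(P) = N`. -/
def PseudoPoly.IsLargestRoot (f : PseudoPoly) (N : ℝ) (P : ℝ) : Prop :=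
  f.eval P = N ∧ ∀ x : ℝ, f.eval x = N → x ≤ P

lemma aux_theta_mono (f : PseudoPoly) : ∀ j, ∀ i, 1 ≤ i → i ≤ j → j ≤ f.d → f.θ i ≤ f.θ j := by
  intro j
  induction j with
  | zero => intro i h1 h2 h3; omega
  | succ k ih =>
    intro i h1 h2 h3
    rcases Nat.eq_or_lt_of_le h2 with h | h
    · rw [h]
    · have hk : i ≤ k := by omega
      exact (ih i h1 hk (by omega)).trans (f.θ_mono k (by omega) (by omega)).le

lemma aux_theta_ge_one (f : PseudoPoly) {i : ℕ} (h1 : 1 ≤ i) (h2 : i ≤ f.d) : 1 ≤ f.θ i :=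
  f.θ_one.trans (aux_theta_mono f i 1 le_rfl h1 h2)

lemma aux_bernoulli {m a b t : ℝ} (hm : 0 < m) (hma : m ≤ a) (hab : a ≤ b) (ht : 1 ≤ t) :
    t * m ^ (t - 1) * (b - a) ≤ b ^ t - a ^ t := by
  have ha : 0 < a := hm.trans_le hma
  have hb : 0 < b := ha.trans_le hab
  have hx : (-1 : ℝ) ≤ (b - a) / a := by
    have : (0:ℝ) ≤ (b - a) / a := div_nonneg (by linarith) ha.le
    linarith
  have key := one_add_mul_self_le_rpow_one_add hx ht
  have h1 : 1 + (b - a) / a = b / a := by field_simp; ring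
  rw [h1, Real.div_rpow hb.le ha.le] at key
  have hat : (0:ℝ) < a ^ t := Real.rpow_pos_of_pos ha t
  have h2 : a ^ t + t * (b - a) * a ^ (t - 1) ≤ b ^ t := by
    have := mul_le_mul_of_nonneg_right key hat.le
    rw [div_mul_cancel₀ _ hat.ne'] at this
    have hsub : a ^ (t - 1) = a ^ t / a := by
      rw [Real.rpow_sub ha, Real.rpow_one]
    rw [hsub]
    calc a ^ t + t * (b - a) * (a ^ t / a)
        = (1 + t * ((b - a) / a)) * a ^ t := by field_simp
      _ ≤ b ^ t := this
  have h3 : m ^ (t - 1) ≤ a ^ (t - 1) :=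
    Real.rpow_le_rpow hm.le hma (by linarith)
  nlinarith [mul_le_mul_of_nonneg_left (mul_le_mul_of_nonneg_right h3 (sub_nonneg.2 hab))
    (le_trans zero_le_one ht)]

lemma aux_cont (f : PseudoPoly) : Continuous f.eval := by
  apply continuous_finset_sum
  intro i hi
  simp only [Finset.mem_Icc] at hi
  have hθ : (0:ℝ) ≤ f.θ i := le_trans zero_le_one (aux_theta_ge_one f hi.1 hi.2)
  exact continuous_const.mul
    (continuous_iff_continuousAt.2 fun x => Real.continuousAt_rpow_const x _ (Or.inr hθ))

lemma aux_eval_zero (f : PseudoPoly) : f.eval 0 = 0 := by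
  apply Finset.sum_eq_zero
  intro i hi
  simp only [Finset.mem_Icc] at hi
  have hθ : f.θ i ≠ 0 := by
    have := aux_theta_ge_one f hi.1 hi.2; linarith
  rw [Real.zero_rpow hθ, mul_zero]

lemma aux_tendsto (f : PseudoPoly) (hd : 2 ≤ f.d) :
    Filter.Tendsto f.eval Filter.atTop Filter.atTop := by
  obtain ⟨e, hde⟩ : ∃ e, f.d = e + 1 := ⟨f.d - 1, by omega⟩
  have he1 : 1 ≤ e := by omega
  set s := f.θ e with hs
  set t := f.θ f.d with htd
  set c := f.a f.d with hc
  have hc0 : 0 < c := f.a_pos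
  have hst : s < t := by
    rw [hs, htd, hde]; exact f.θ_mono e he1 (by omega)
  have hs1 : 1 ≤ s := aux_theta_ge_one f he1 (by omega)
  set A0 : ℝ := ∑ i ∈ Finset.Icc 1 e, |f.a i| with hA0
  have hg : Filter.Tendsto (fun x : ℝ => x ^ s * (c * x ^ (t - s) - A0))
      Filter.atTop Filter.atTop := by
    apply Filter.Tendsto.atTop_mul_atTop₀ (tendsto_rpow_atTop (by linarith))
    apply Filter.tendsto_atTop_add_const_right
    exact (tendsto_rpow_atTop (by linarith)).const_mul_atTop hc0
  apply Filter.tendsto_atTop_mono' _ _ hg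
  filter_upwards [Filter.eventually_ge_atTop (1:ℝ)] with x hx
  have hx0 : (0:ℝ) < x := lt_of_lt_of_le zero_lt_one hx
  have hts : x ^ s * x ^ (t - s) = x ^ t := by
    rw [← Real.rpow_add hx0]; ring_nf
  have hsum : -(A0 * x ^ s) ≤ ∑ i ∈ Finset.Icc 1 e, f.a i * x ^ f.θ i := by
    rw [hA0, Finset.sum_mul, ← Finset.sum_neg_distrib]
    apply Finset.sum_le_sum
    intro i hi
    simp only [Finset.mem_Icc] at hi
    have hθi : f.θ i ≤ s := aux_theta_mono f e i hi.1 hi.2 (by omega)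
    have h1 : x ^ f.θ i ≤ x ^ s := Real.rpow_le_rpow_of_exponent_le hx hθi
    have h2 : (0:ℝ) ≤ x ^ f.θ i := (Real.rpow_pos_of_pos hx0 _).le
    calc -(|f.a i| * x ^ s) ≤ -(|f.a i| * x ^ f.θ i) := by
          apply neg_le_neg; exact mul_le_mul_of_nonneg_left h1 (abs_nonneg _)
      _ ≤ f.a i * x ^ f.θ i := by
          rw [← neg_mul]; exact mul_le_mul_of_nonneg_right (neg_abs_le _) h2
  have hsplit : f.eval x = (∑ i ∈ Finset.Icc 1 e, f.a i * x ^ f.θ i) + c * x ^ t := by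
    rw [PseudoPoly.eval, hde, Finset.sum_Icc_succ_top (by omega), ← hde]
  calc x ^ s * (c * x ^ (t - s) - A0) = c * x ^ t - A0 * x ^ s := by
        rw [mul_sub, show x ^ s * (c * x ^ (t-s)) = c * (x ^ s * x ^ (t-s)) by ring, hts]
        ring
    _ ≤ f.eval x := by rw [hsplit]; linarith

set_option maxHeartbeats 1000000 in
/-- For `d ≥ 2` and large `N`, the largest solution `P` of `f(P) = N` satisfies
`P − (N/a_d)^{1/θ_d} ≪ P^{θ_{d−1} − θ_d + 1}`. -/
theorem largestRoot_approx (f : PseudoPoly) (hd : 2 ≤ f.d) :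
    ∃ C > (0 : ℝ), ∃ N₀ : ℕ, ∀ N : ℕ, N₀ ≤ N → ∀ P : ℝ, f.IsLargestRoot N P →
      |P - ((N : ℝ) / f.a f.d) ^ (1 / f.θ f.d)| ≤
        C * P ^ (f.θ (f.d - 1) - f.θ f.d + 1) := by
  obtain ⟨e, hde⟩ : ∃ e, f.d = e + 1 := ⟨f.d - 1, by omega⟩
  have hed : f.d - 1 = e := by omega
  have he1 : 1 ≤ e := by omega
  set s := f.θ e with hs
  set t := f.θ f.d with htdef
  set c := f.a f.d with hcdef
  have hc0 : 0 < c := f.a_pos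
  have hst : s < t := by rw [hs, htdef, hde]; exact f.θ_mono e he1 (by omega)
  have hs1 : 1 ≤ s := aux_theta_ge_one f he1 (by omega)
  have ht1 : 1 < t := lt_of_le_of_lt hs1 hst
  have ht0 : 0 < t := by linarith
  set A : ℝ := (∑ i ∈ Finset.Icc 1 e, |f.a i|) + 1 with hA
  have hA1 : 1 ≤ A := by
    have : 0 ≤ ∑ i ∈ Finset.Icc 1 e, |f.a i| := Finset.sum_nonneg fun i _ => abs_nonneg _
    rw [hA]; linarith
  have hA0 : 0 < A := by linarith
  set A' : ℝ := (∑ i ∈ Finset.Icc 1 f.d, |f.a i|) + 1 with hA'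
  have hA'1 : 1 ≤ A' := by
    have : 0 ≤ ∑ i ∈ Finset.Icc 1 f.d, |f.a i| := Finset.sum_nonneg fun i _ => abs_nonneg _
    rw [hA']; linarith
  set P1 : ℝ := max 1 ((2 * A / c) ^ (1 / (t - s))) with hP1def
  have hP1 : 1 ≤ P1 := le_max_left _ _
  set C : ℝ := A / c * 2 ^ (t - 1) / t with hC
  have hCpos : 0 < C := by
    rw [hC]; positivity
  refine ⟨C, hCpos, ⌈A' * P1 ^ t + A' + 1⌉₊, ?_⟩
  intro N hN P hP
  obtain ⟨hPeval, hPmax⟩ := hP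
  rw [hed, ← hs]
  have hNlb : A' * P1 ^ t + A' + 1 ≤ (N:ℝ) :=
    le_trans (Nat.le_ceil _) (Nat.cast_le.2 hN)
  have hP1t0 : 0 ≤ P1 ^ t := Real.rpow_nonneg (by linarith) t
  have hN0 : (0:ℝ) < N := by
    have h := mul_nonneg (by linarith : (0:ℝ) ≤ A') hP1t0
    linarith
  -- P ≥ 0 via IVT
  obtain ⟨X, hXprop⟩ := (((aux_tendsto f hd).eventually_ge_atTop (N:ℝ)).and
      (Filter.eventually_ge_atTop (0:ℝ))).exists
  have hmem : (N:ℝ) ∈ Set.Icc (f.eval 0) (f.eval X) := by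
    rw [aux_eval_zero f]; exact ⟨hN0.le, hXprop.1⟩
  obtain ⟨x₀, hx₀mem, hx₀⟩ := intermediate_value_Icc hXprop.2 (aux_cont f).continuousOn hmem
  have hP0 : 0 ≤ P := le_trans hx₀mem.1 (hPmax x₀ hx₀)
  -- upper bound on eval gives P large
  set M : ℝ := max 1 P with hM
  have hM1 : 1 ≤ M := le_max_left _ _
  have hMt0 : 0 ≤ M ^ t := Real.rpow_nonneg (by linarith) t
  have hNub : (N:ℝ) ≤ A' * M ^ t := by
    have hsum : f.eval P ≤ ∑ i ∈ Finset.Icc 1 f.d, |f.a i| * M ^ t := by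
      apply Finset.sum_le_sum
      intro i hi
      simp only [Finset.mem_Icc] at hi
      have hθi0 : (0:ℝ) ≤ f.θ i := le_trans zero_le_one (aux_theta_ge_one f hi.1 hi.2)
      have hθit : f.θ i ≤ t := aux_theta_mono f f.d i hi.1 hi.2 le_rfl
      have h1 : P ^ f.θ i ≤ M ^ t :=
        (Real.rpow_le_rpow hP0 (le_max_right 1 P) hθi0).trans
          (Real.rpow_le_rpow_of_exponent_le hM1 hθit)
      calc f.a i * P ^ f.θ i ≤ |f.a i| * P ^ f.θ i :=
            mul_le_mul_of_nonneg_right (le_abs_self _) (Real.rpow_nonneg hP0 _)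
        _ ≤ |f.a i| * M ^ t := mul_le_mul_of_nonneg_left h1 (abs_nonneg _)
    rw [← Finset.sum_mul] at hsum
    have h3 : (∑ i ∈ Finset.Icc 1 f.d, |f.a i|) * M ^ t ≤ A' * M ^ t := by
      apply mul_le_mul_of_nonneg_right _ hMt0
      rw [hA']; linarith
    calc (N:ℝ) = f.eval P := hPeval.symm
      _ ≤ _ := hsum
      _ ≤ _ := h3
  have hMP1 : P1 < M := by
    by_contra hle
    push_neg at hle
    have h6 : M ^ t ≤ P1 ^ t := Real.rpow_le_rpow (by linarith) hle ht0.le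
    have h7 : A' * M ^ t ≤ A' * P1 ^ t :=
      mul_le_mul_of_nonneg_left h6 (by linarith)
    linarith
  have hPP1 : P1 < P := by
    rcases le_total 1 P with h | h
    · rwa [hM, max_eq_right h] at hMP1
    · rw [hM, max_eq_left h] at hMP1; linarith
  have hPpos : 0 < P := by linarith
  have hP1le : 1 ≤ P := by linarith
  -- P ^ (t - s) is large
  have hCts : 2 * A / c ≤ P ^ (t - s) := by
    have h1 : (2 * A / c) ^ (1 / (t - s)) ≤ P1 := le_max_right _ _
    have h3 : ((2 * A / c) ^ (1 / (t - s))) ^ (t - s) ≤ P ^ (t - s) :=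
      Real.rpow_le_rpow (Real.rpow_nonneg (by positivity) _) (h1.trans hPP1.le) (by linarith)
    have h4 : ((2 * A / c) ^ (1 / (t - s))) ^ (t - s) = 2 * A / c := by
      rw [← Real.rpow_mul (by positivity), one_div,
        inv_mul_cancel₀ (by intro h0; rw [sub_eq_zero] at h0; linarith : t - s ≠ 0), Real.rpow_one]
    rwa [h4] at h3
  -- split off the top term
  set S : ℝ := ∑ i ∈ Finset.Icc 1 e, f.a i * P ^ f.θ i with hSdef
  have hsplit : f.eval P = S + c * P ^ t := by
    rw [hSdef, hcdef, htdef, PseudoPoly.eval, hde, Finset.sum_Icc_succ_top (by omega), ← hde]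
  have hsplitN : S + c * P ^ t = (N:ℝ) := by rw [← hsplit]; exact hPeval
  have hSb : |S| ≤ A * P ^ s := by
    calc |S| ≤ ∑ i ∈ Finset.Icc 1 e, |f.a i * P ^ f.θ i| := Finset.abs_sum_le_sum_abs _ _
      _ ≤ ∑ i ∈ Finset.Icc 1 e, |f.a i| * P ^ s := by
          apply Finset.sum_le_sum
          intro i hi
          simp only [Finset.mem_Icc] at hi
          rw [abs_mul, abs_of_nonneg (Real.rpow_nonneg hP0 _)]
          exact mul_le_mul_of_nonneg_left
            (Real.rpow_le_rpow_of_exponent_le hP1le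
              (aux_theta_mono f e i hi.1 hi.2 (by omega))) (abs_nonneg _)
      _ ≤ A * P ^ s := by
          rw [← Finset.sum_mul]
          exact mul_le_mul_of_nonneg_right (by rw [hA]; linarith)
            (Real.rpow_nonneg hP0 _)
  -- facts about Q
  set Q : ℝ := ((N:ℝ) / c) ^ (1 / t) with hQdef
  have hQpos : 0 < Q := Real.rpow_pos_of_pos (by positivity) _
  have hQt : Q ^ t = (N:ℝ) / c := by
    rw [hQdef, ← Real.rpow_mul (by positivity), one_div,
      inv_mul_cancel₀ (by linarith : t ≠ 0), Real.rpow_one]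
  have hPt0 : (0:ℝ) < P ^ t := Real.rpow_pos_of_pos hPpos t
  have hPs0 : (0:ℝ) < P ^ s := Real.rpow_pos_of_pos hPpos s
  have hdiff : |P ^ t - Q ^ t| ≤ A / c * P ^ s := by
    have h1 : c * (P ^ t - Q ^ t) = -S := by
      rw [hQt]; field_simp; linarith
    have h2 : |c * (P ^ t - Q ^ t)| = c * |P ^ t - Q ^ t| := by
      rw [abs_mul, abs_of_pos hc0]
    have h4 : c * |P ^ t - Q ^ t| ≤ A * P ^ s := by
      rw [← h2, h1, abs_neg]; exact hSb
    rw [div_mul_eq_mul_div, le_div_iff₀ hc0]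
    linarith [h4, mul_comm (|P ^ t - Q ^ t|) c]
  -- Q ≥ P / 2
  have hQge : P / 2 ≤ Q := by
    have hAc : A / c ≤ P ^ (t - s) / 2 := by
      rw [mul_div_assoc] at hCts; linarith
    have hPts : P ^ s * P ^ (t - s) = P ^ t := by
      rw [← Real.rpow_add hPpos]; ring_nf
    have h1 : A / c * P ^ s ≤ P ^ t / 2 := by
      calc A / c * P ^ s ≤ P ^ (t - s) / 2 * P ^ s :=
            mul_le_mul_of_nonneg_right hAc hPs0.le
        _ = P ^ s * P ^ (t - s) / 2 := by ring
        _ = P ^ t / 2 := by rw [hPts]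
    have hQtv : Q ^ t = P ^ t + S / c := by
      rw [hQt, ← hsplitN]; field_simp; ring
    have hS2 : -(A * P ^ s) ≤ S := by
      have := neg_abs_le S; linarith [abs_nonneg S, hSb]
    have hS3 : -(A / c * P ^ s) ≤ S / c := by
      calc -(A / c * P ^ s) = -(A * P ^ s) / c := by ring
        _ ≤ S / c := by gcongr
    have h2 : P ^ t / 2 ≤ Q ^ t := by rw [hQtv]; linarith
    have h3 : (P / 2) ^ t ≤ P ^ t / 2 := by
      rw [Real.div_rpow hPpos.le (by norm_num)]
      have h4 : (2:ℝ) ≤ 2 ^ t := by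
        calc (2:ℝ) = 2 ^ (1:ℝ) := (Real.rpow_one 2).symm
          _ ≤ 2 ^ t := Real.rpow_le_rpow_of_exponent_le one_le_two ht1.le
      have h5 : (0:ℝ) < 2 ^ t := Real.rpow_pos_of_pos two_pos t
      rw [div_le_div_iff₀ h5 two_pos]
      linarith [mul_le_mul_of_nonneg_left h4 hPt0.le]
    by_contra hcon
    push_neg at hcon
    have : Q ^ t < (P / 2) ^ t := Real.rpow_lt_rpow hQpos.le hcon ht0
    linarith
  -- main estimate
  have hhalf : (0:ℝ) < P / 2 := by linarith
  have hmain : t * (P / 2) ^ (t - 1) * |P - Q| ≤ A / c * P ^ s := by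
    rcases le_total P Q with h | h
    · have hkey := aux_bernoulli hhalf (by linarith : P / 2 ≤ P) h ht1.le
      rw [abs_sub_comm, abs_of_nonneg (by linarith : (0:ℝ) ≤ Q - P)]
      have := neg_le_abs (P ^ t - Q ^ t)
      linarith
    · have hkey := aux_bernoulli hhalf hQge h ht1.le
      rw [abs_of_nonneg (by linarith : (0:ℝ) ≤ P - Q)]
      have := le_abs_self (P ^ t - Q ^ t)
      linarith
  -- final algebra
  have hPt1 : (0:ℝ) < P ^ (t - 1) := Real.rpow_pos_of_pos hPpos _
  have h2t1 : (0:ℝ) < (2:ℝ) ^ (t - 1) := Real.rpow_pos_of_pos two_pos _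
  have hm : (P / 2) ^ (t - 1) = P ^ (t - 1) / 2 ^ (t - 1) :=
    Real.div_rpow hPpos.le (by norm_num : (0:ℝ) ≤ 2) (t - 1)
  have hps : P ^ (s - t + 1) = P ^ s / P ^ (t - 1) := by
    rw [show s - t + 1 = s - (t - 1) by ring, Real.rpow_sub hPpos]
  rw [hps, hC]
  rw [hm] at hmain
  have hpos2 : (0:ℝ) < t * (P ^ (t - 1) / 2 ^ (t - 1)) := by positivity
  have hstep : |P - Q| ≤ A / c * P ^ s / (t * (P ^ (t - 1) / 2 ^ (t - 1))) := by
    rw [le_div_iff₀ hpos2]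
    calc |P - Q| * (t * (P ^ (t - 1) / 2 ^ (t - 1)))
        = t * (P ^ (t - 1) / 2 ^ (t - 1)) * |P - Q| := by ring
      _ ≤ A / c * P ^ s := hmain
  have heq : A / c * P ^ s / (t * (P ^ (t - 1) / 2 ^ (t - 1)))
      = A / c * 2 ^ (t - 1) / t * (P ^ s / P ^ (t - 1)) := by
    field_simp
  rw [heq] at hstep
  exact hstep
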